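/- arXiv:1408.1533 — 2 statements merged into one kernel-verified Lean document; each statement's English description precedes it below -/
import Mathlib

section
/- Let k ≥ 2 be an integer and p > 1 a real number. There is a constant C = C(k,p) > 0 such that for all integers N ≥ 2 and all positive integers i, the exponential sum T_i(α) = ∑_{n ≤ N} b_{2^{i-1},2^i}(n) e(αn) satisfies ∫₀¹ |T_i(α)|^p dα ≤ C · 2^i N^{p-1}. -/
noncomputable def e (x : ℝ) : ℂ := Complex.exp (2 * Real.pi * Complex.I * x)

open Classical in
/-- `b k y z n = ∑_{d^k ∣ n, y ≤ d < z} μ(d)` for `n ≥ 1`, and `b k y z 0 = 0`. -/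
noncomputable def b (k : ℕ) (y z : ℝ) (n : ℕ) : ℤ :=
  ∑ d ∈ (Finset.Icc 1 n).filter (fun d : ℕ => y ≤ (d : ℝ) ∧ (d : ℝ) < z ∧ d ^ k ∣ n),
    ArithmeticFunction.moebius d

/-- The exponential sum `T_i(α) = ∑_{n ≤ N} b_{2^{i-1},2^i}(n) e(αn)`. -/
noncomputable def T (k N i : ℕ) (α : ℝ) : ℂ :=
  ∑ n ∈ Finset.Icc 1 N, (b k ((2 : ℝ) ^ (i - 1)) ((2 : ℝ) ^ i) n : ℂ) * e (α * n)

open Finset Real MeasureTheory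

noncomputable def Ker (M : ℕ) (β : ℝ) : ℂ := ∑ m ∈ Finset.Icc 1 M, e (β * m)


lemma e_add (x y : ℝ) : e (x + y) = e x * e y := by
  rw [e, e, e, ← Complex.exp_add]; push_cast; ring_nf

lemma e_nat (m : ℕ) : e m = 1 := by
  simpa [e, mul_comm] using Complex.exp_int_mul_two_pi_mul_I (m : ℤ)

lemma e_norm (x : ℝ) : ‖e x‖ = 1 := by
  simp [e, Complex.norm_exp]

lemma e_pow (β : ℝ) (m : ℕ) : e (β * m) = (e β) ^ m := by
  rw [e, e, ← Complex.exp_nat_mul]; push_cast; ring_nf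

lemma Ker_norm_le (M : ℕ) (β : ℝ) : ‖Ker M β‖ ≤ M := by
  calc ‖Ker M β‖ ≤ ∑ m ∈ Finset.Icc 1 M, ‖e (β * m)‖ := norm_sum_le _ _
  _ = M := by
      have : ∀ m ∈ Finset.Icc 1 M, ‖e (β * m)‖ = 1 := fun m _ => e_norm _
      rw [Finset.sum_congr rfl this]
      simp

lemma Ker_periodic (M : ℕ) : Function.Periodic (Ker M) 1 := by
  intro β
  unfold Ker
  refine Finset.sum_congr rfl fun m hm => ?_
  have : (β + 1) * m = β * m + m := by ring
  rw [this, e_add, e_nat, mul_one]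

lemma Ker_continuous (M : ℕ) : Continuous (Ker M) := by
  unfold Ker
  refine continuous_finset_sum _ fun m _ => ?_
  unfold e
  fun_prop

lemma norm_e_sub_one (β : ℝ) (hβ0 : 0 ≤ β) (hβ1 : β ≤ 1) :
    ‖e β - 1‖ = 2 * Real.sin (π * β) := by
  have h : e β = Complex.exp ((2 * π * β : ℝ) * Complex.I) := by
    unfold e; push_cast; ring_nf
  rw [h, Complex.exp_mul_I]
  have hc : Complex.cos (2 * π * β : ℝ) = ((Real.cos (2 * π * β) : ℝ) : ℂ) :=
    (Complex.ofReal_cos _).symm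
  have hs : Complex.sin (2 * π * β : ℝ) = ((Real.sin (2 * π * β) : ℝ) : ℂ) :=
    (Complex.ofReal_sin _).symm
  rw [hc, hs]
  have : ((Real.cos (2 * π * β) : ℝ) : ℂ) + (Real.sin (2 * π * β) : ℝ) * Complex.I - 1
      = ((Real.cos (2 * π * β) - 1 : ℝ) : ℂ) + (Real.sin (2 * π * β) : ℝ) * Complex.I := by
    push_cast; ring
  rw [this, Complex.norm_add_mul_I]
  have hhalf : Real.sin (π * β) = Real.sqrt ((1 - Real.cos (2 * π * β)) / 2) := by
    have := Real.sin_half_eq_sqrt (x := 2 * π * β) (by positivity)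
      (by nlinarith [Real.pi_pos])
    rw [show 2 * π * β / 2 = π * β by ring] at this
    exact this
  rw [hhalf]
  rw [show (Real.cos (2 * π * β) - 1) ^ 2 + Real.sin (2 * π * β) ^ 2
      = 4 * ((1 - Real.cos (2 * π * β)) / 2) by
    nlinarith [Real.sin_sq_add_cos_sq (2 * π * β)]]
  rw [Real.sqrt_mul (by norm_num : (0:ℝ) ≤ 4), show Real.sqrt 4 = 2 by
    rw [show (4:ℝ) = 2 ^ 2 by norm_num, Real.sqrt_sq (by norm_num)]]

lemma Ker_norm_le_inv_sin (M : ℕ) {β : ℝ} (h0 : 0 < β) (h1 : β < 1) :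
    ‖Ker M β‖ ≤ 1 / Real.sin (π * β) := by
  have hsin : 0 < Real.sin (π * β) := by
    apply Real.sin_pos_of_pos_of_lt_pi (by positivity)
    nlinarith [Real.pi_pos]
  have hq1 : e β ≠ 1 := by
    intro hq
    rw [e, Complex.exp_eq_one_iff] at hq
    obtain ⟨n, hn⟩ := hq
    have h2 : ((β : ℂ)) * (2 * (π:ℂ) * Complex.I) = (n : ℂ) * (2 * (π:ℂ) * Complex.I) := by
      rw [← hn]; push_cast; ring
    have hne : (2 * (π:ℂ) * Complex.I) ≠ 0 := by
      simp [Real.pi_ne_zero, Complex.I_ne_zero]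
    have : (β : ℂ) = (n : ℂ) := mul_right_cancel₀ hne h2
    have : β = (n : ℝ) := by exact_mod_cast this
    subst this
    rcases lt_trichotomy n 0 with h|h|h
    · have : (n:ℝ) < 0 := by exact_mod_cast h
      linarith
    · subst h; simp at h0
    · have : (1:ℝ) ≤ (n:ℝ) := by exact_mod_cast h
      linarith
  have key : Ker M β = e β * ((e β) ^ M - 1) / (e β - 1) := by
    unfold Ker
    rw [show Finset.Icc 1 M = Finset.Ico 1 (M+1) by rfl]
    rw [Finset.sum_Ico_eq_sum_range]
    simp only [e_pow]
    simp only [Nat.add_sub_cancel, pow_add, pow_one]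
    rw [← Finset.mul_sum, geom_sum_eq hq1, mul_div_assoc]
  rw [key]
  have hnorm : ‖e β - 1‖ = 2 * Real.sin (π * β) := norm_e_sub_one β h0.le h1.le
  rw [norm_div, hnorm, norm_mul, e_norm, one_mul]
  rw [div_le_div_iff₀ (by linarith) hsin]
  have : ‖(e β) ^ M - 1‖ ≤ 2 := by
    calc ‖(e β) ^ M - 1‖ ≤ ‖(e β)^M‖ + ‖(1:ℂ)‖ := norm_sub_le _ _
    _ = 2 := by rw [norm_pow, e_norm]; norm_num
  nlinarith

lemma e_neg (x : ℝ) : e (-x) = starRingEnd ℂ (e x) := by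
  rw [e, e, ← Complex.exp_conj]
  have : (starRingEnd ℂ) (2 * ↑π * Complex.I * ↑x) = 2 * ↑π * Complex.I * (↑(-x) : ℂ) := by
    simp only [map_mul, Complex.conj_ofReal, Complex.conj_I, map_ofNat]
    push_cast
    ring
  rw [this]

lemma Ker_norm_one_sub (M : ℕ) (β : ℝ) : ‖Ker M (1 - β)‖ = ‖Ker M β‖ := by
  have : Ker M (1 - β) = starRingEnd ℂ (Ker M β) := by
    rw [Ker, Ker, map_sum]
    refine Finset.sum_congr rfl fun m hm => ?_
    rw [← e_neg]
    have h1 : (1 - β) * m = (-(β * m)) + m := by ring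
    rw [h1, e_add, e_nat, mul_one]
  rw [this, RCLike.norm_conj]

lemma Ker_norm_le_inv (M : ℕ) {β : ℝ} (h0 : 0 < β) (h1 : β ≤ 1/2) :
    ‖Ker M β‖ ≤ (2*β)⁻¹ := by
  have hs2 : 2 * β ≤ Real.sin (π * β) := by
    have h := Real.mul_le_sin (x := π * β) (by positivity)
      (by nlinarith [Real.pi_pos])
    calc 2 * β = 2 / π * (π * β) := by field_simp
    _ ≤ Real.sin (π * β) := h
  calc ‖Ker M β‖ ≤ 1 / Real.sin (π * β) := Ker_norm_le_inv_sin M h0 (by linarith)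
  _ ≤ (2*β)⁻¹ := by
      rw [one_div]
      exact inv_anti₀ (by linarith) hs2

lemma Ker_Lp (p : ℝ) (hp : 1 < p) (M : ℕ) :
    (∫ β in (0:ℝ)..1, ‖Ker M β‖ ^ p) ≤ (1 + 1/(p-1)) * (M:ℝ) ^ (p-1) := by
  have hp0 : (0:ℝ) < p := by linarith
  have hp1 : p - 1 ≠ 0 := sub_ne_zero.mpr (by linarith)
  have hcont : Continuous (fun β => ‖Ker M β‖ ^ p) :=
    ((Ker_continuous M).norm).rpow_const (fun x => Or.inr hp0.le)
  have hint : ∀ a b : ℝ, IntervalIntegrable (fun β => ‖Ker M β‖ ^ p) volume a b :=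
    fun a b => hcont.intervalIntegrable a b
  rcases Nat.eq_zero_or_pos M with hM | hM
  · subst hM
    have hz : ∀ β : ℝ, ‖Ker 0 β‖ ^ p = 0 := by
      intro β; rw [Ker]; simp [Real.zero_rpow hp0.ne']
    rw [intervalIntegral.integral_congr (g := fun _ => (0:ℝ)) (fun β _ => hz β)]
    simp only [intervalIntegral.integral_const, smul_zero, Nat.cast_zero]
    rw [Real.zero_rpow (by linarith : p - 1 ≠ 0), mul_zero]
  · have hM0 : (0:ℝ) < M := by exact_mod_cast hM
    have hM1 : (1:ℝ) ≤ M := by exact_mod_cast hM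
    set f : ℝ → ℝ := fun β => ‖Ker M β‖ ^ p with hf
    set a : ℝ := 1/(2*M) with ha
    have ha0 : 0 < a := by positivity
    have ha2 : a ≤ 1/2 := by
      rw [ha, div_le_div_iff₀ (by positivity) (by norm_num)]
      nlinarith
    have hsym : (∫ β in (1/2:ℝ)..1, f β) = ∫ β in (0:ℝ)..(1/2), f β := by
      have h1 : (∫ x in (0:ℝ)..(1/2), f (1 - x)) = ∫ x in (1/2:ℝ)..1, f x := by
        rw [intervalIntegral.integral_comp_sub_left f 1]; norm_num
      rw [← h1]
      exact intervalIntegral.integral_congr (fun β _ => by simp only [hf, Ker_norm_one_sub])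
    have hsplit : (∫ β in (0:ℝ)..1, f β)
        = (∫ β in (0:ℝ)..(1/2), f β) + ∫ β in (1/2:ℝ)..1, f β :=
      (intervalIntegral.integral_add_adjacent_intervals (hint 0 (1/2)) (hint (1/2) 1)).symm
    have hsplit2 : (∫ β in (0:ℝ)..(1/2), f β)
        = (∫ β in (0:ℝ)..a, f β) + ∫ β in a..(1/2:ℝ), f β :=
      (intervalIntegral.integral_add_adjacent_intervals (hint 0 a) (hint a (1/2))).symm
    have hpiece1 : (∫ β in (0:ℝ)..a, f β) ≤ (M:ℝ)^(p-1) / 2 := by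
      have hmono : ∀ β ∈ Set.Icc (0:ℝ) a, f β ≤ (M:ℝ)^p := fun β _ =>
        Real.rpow_le_rpow (norm_nonneg _) (Ker_norm_le M β) hp0.le
      calc (∫ β in (0:ℝ)..a, f β) ≤ ∫ _ in (0:ℝ)..a, (M:ℝ)^p :=
            intervalIntegral.integral_mono_on ha0.le (hint 0 a)
              (intervalIntegrable_const) hmono
      _ = a * (M:ℝ)^p := by rw [intervalIntegral.integral_const]; simp [smul_eq_mul]
      _ = (M:ℝ)^(p-1) / 2 := by
          have h2 : (M:ℝ)^p = (M:ℝ)^(p-1) * M := by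
            rw [← Real.rpow_add_one hM0.ne']; ring_nf
          rw [ha, h2]; field_simp
    have hpiece2 : (∫ β in a..(1/2:ℝ), f β) ≤ (M:ℝ)^(p-1) / (2*(p-1)) := by
      have hmono : ∀ β ∈ Set.Icc a (1/2:ℝ), f β ≤ (2:ℝ)^(-p) * β^(-p) := by
        intro β hβ
        have hβ0 : 0 < β := lt_of_lt_of_le ha0 hβ.1
        have h1 : ‖Ker M β‖ ≤ (2*β)⁻¹ := Ker_norm_le_inv M hβ0 hβ.2
        calc f β ≤ ((2*β)⁻¹)^p := Real.rpow_le_rpow (norm_nonneg _) h1 hp0.le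
        _ = (2:ℝ)^(-p) * β^(-p) := by
            rw [Real.inv_rpow (by positivity), ← Real.rpow_neg (by positivity),
              Real.mul_rpow (by norm_num) hβ0.le]
      have hint2 : IntervalIntegrable (fun β => (2:ℝ)^(-p) * β^(-p)) volume a (1/2) := by
        apply ContinuousOn.intervalIntegrable
        apply ContinuousOn.mul continuousOn_const
        intro x hx
        have hx0 : x ≠ 0 := by
          rw [Set.uIcc_of_le ha2] at hx
          exact (lt_of_lt_of_le ha0 hx.1).ne'
        exact (Real.continuousAt_rpow_const x (-p) (Or.inl hx0)).continuousWithinAt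
      have hY : a^(-p+1) = (2:ℝ)^(p-1) * (M:ℝ)^(p-1) := by
        have hinv : a = (2*(M:ℝ))⁻¹ := by rw [ha, one_div]
        rw [hinv, Real.inv_rpow (by positivity), ← Real.rpow_neg (by positivity)]
        rw [show -(-p+1) = p - 1 by ring, Real.mul_rpow (by norm_num) hM0.le]
      have hX : (0:ℝ) ≤ (1/2:ℝ)^(-p+1) := Real.rpow_nonneg (by norm_num) _
      calc (∫ β in a..(1/2:ℝ), f β) ≤ ∫ β in a..(1/2:ℝ), (2:ℝ)^(-p) * β^(-p) :=
            intervalIntegral.integral_mono_on ha2 (hint a (1/2)) hint2 hmono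
      _ = (2:ℝ)^(-p) * ∫ β in a..(1/2:ℝ), β^(-p) := intervalIntegral.integral_const_mul _ _
      _ = (2:ℝ)^(-p) * (((1/2:ℝ)^(-p+1) - a^(-p+1))/(-p+1)) := by
            rw [integral_rpow]
            right
            refine ⟨by intro h; linarith, ?_⟩
            rw [Set.uIcc_of_le ha2]
            intro h
            exact absurd h.1 (not_le.mpr ha0)
      _ = (2:ℝ)^(-p) * ((a^(-p+1) - (1/2:ℝ)^(-p+1))/(p-1)) := by
            rw [show (-p+1 : ℝ) = -(p-1) by ring, div_neg, ← neg_div, neg_sub]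
      _ ≤ (2:ℝ)^(-p) * (a^(-p+1)/(p-1)) := by
            have h2p : (0:ℝ) ≤ (2:ℝ)^(-p) := Real.rpow_nonneg (by norm_num) _
            apply mul_le_mul_of_nonneg_left _ h2p
            apply div_le_div_of_nonneg_right _ (by linarith)
            linarith
      _ = (M:ℝ)^(p-1) / (2*(p-1)) := by
            rw [hY, show (2:ℝ)^(-p) * ((2:ℝ)^(p-1) * (M:ℝ)^(p-1)/(p-1))
              = ((2:ℝ)^(-p) * (2:ℝ)^(p-1)) * ((M:ℝ)^(p-1)/(p-1)) by ring]
            rw [← Real.rpow_add (by norm_num : (0:ℝ) < 2), show -p + (p-1) = (-1:ℝ) by ring,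
              Real.rpow_neg_one]
            field_simp
    have hhalf : 2 * ((M:ℝ)^(p-1) / (2*(p-1))) = (M:ℝ)^(p-1)/(p-1) := by
      field_simp
    have hrhs : (1 + 1/(p-1)) * (M:ℝ)^(p-1) = (M:ℝ)^(p-1) + (M:ℝ)^(p-1)/(p-1) := by
      ring
    linarith [hsplit, hsplit2, hsym, hpiece1, hpiece2]

lemma periodic_scale (f : ℝ → ℝ) (hper : Function.Periodic f 1)
    (hint : ∀ t₁ t₂, IntervalIntegrable f MeasureTheory.volume t₁ t₂) (c : ℕ) (hc : 1 ≤ c) :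
    ∫ α in (0:ℝ)..1, f (c * α) = ∫ β in (0:ℝ)..1, f β := by
  have hc0 : (c:ℝ) ≠ 0 := by positivity
  rw [intervalIntegral.integral_comp_mul_left f hc0]
  have := hper.intervalIntegral_add_zsmul_eq (c : ℤ) 0 hint
  simp only [zero_add, zsmul_eq_mul, Int.cast_natCast] at this
  rw [mul_zero, mul_one, show ((c:ℝ)) = ((c:ℤ) • (1:ℝ)) by simp] at *
  rw [this]
  have hc0' : (c:ℝ) ≠ 0 := by positivity
  simp only [zsmul_eq_mul, Int.cast_natCast, mul_one]
  rw [smul_eq_mul, inv_mul_cancel_left₀ hc0']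

lemma T_eq (k N i : ℕ) (hk : 2 ≤ k) (hi : 1 ≤ i) (α : ℝ) :
    T k N i α = ∑ d ∈ Finset.Ico (2^(i-1)) (2^i),
      ((ArithmeticFunction.moebius d : ℤ) : ℂ) * Ker (N / d^k) ((d^k : ℕ) * α) := by
  classical
  unfold T b
  -- rewrite the filter
  have hfilt : ∀ n ∈ Finset.Icc 1 N,
      (Finset.Icc 1 n).filter
        (fun d : ℕ => (2:ℝ)^(i-1) ≤ (d : ℝ) ∧ (d : ℝ) < (2:ℝ)^i ∧ d ^ k ∣ n)
      = (Finset.Ico (2^(i-1)) (2^i)).filter (fun d : ℕ => d ^ k ∣ n) := by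
    intro n hn
    simp only [Finset.mem_Icc] at hn
    ext d
    simp only [Finset.mem_filter, Finset.mem_Icc, Finset.mem_Ico]
    constructor
    · rintro ⟨⟨h1, h2⟩, hy, hz, hdvd⟩
      refine ⟨⟨?_, ?_⟩, hdvd⟩
      · exact_mod_cast (by push_cast at hy ⊢; exact hy : ((2^(i-1):ℕ) :ℝ) ≤ (d:ℝ))
      · exact_mod_cast (by push_cast at hz ⊢; exact hz : (d:ℝ) < ((2^i:ℕ) :ℝ))
    · rintro ⟨⟨h1, h2⟩, hdvd⟩
      have hd1 : 1 ≤ d := le_trans (Nat.one_le_two_pow) h1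
      have hdn : d ≤ n := by
        have hdk : d ^ k ≤ n := Nat.le_of_dvd (by omega) hdvd
        calc d ≤ d ^ k := Nat.le_self_pow (by omega) d
        _ ≤ n := hdk
      refine ⟨⟨hd1, hdn⟩, ?_, ?_, hdvd⟩
      · push_cast; exact_mod_cast h1
      · push_cast; exact_mod_cast h2
  rw [Finset.sum_congr rfl (fun n hn => by rw [hfilt n hn])]
  -- push casts, swap sums
  have hpush : ∀ n ∈ Finset.Icc 1 N,
      ((∑ d ∈ (Finset.Ico (2^(i-1)) (2^i)).filter (fun d : ℕ => d ^ k ∣ n),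
        ArithmeticFunction.moebius d : ℤ) : ℂ) * e (α * n)
      = ∑ d ∈ Finset.Ico (2^(i-1)) (2^i),
          (if d ^ k ∣ n then ((ArithmeticFunction.moebius d : ℤ) : ℂ) * e (α * n) else 0) := by
    intro n hn
    rw [Finset.sum_filter, Int.cast_sum, Finset.sum_mul]
    refine Finset.sum_congr rfl fun d hd => ?_
    split <;> simp
  rw [Finset.sum_congr rfl hpush, Finset.sum_comm]
  refine Finset.sum_congr rfl fun d hd => ?_
  rw [← Finset.sum_filter, Ker, Finset.mul_sum]
  have hd1 : 1 ≤ d := le_trans Nat.one_le_two_pow (Finset.mem_Ico.mp hd).1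
  have hdk0 : 0 < d ^ k := Nat.pow_pos hd1
  refine Finset.sum_nbij' (fun n => n / d^k) (fun m => d^k * m) ?_ ?_ ?_ ?_ ?_
  · intro n hn
    simp only [Finset.mem_filter, Finset.mem_Icc] at hn ⊢
    obtain ⟨⟨hn1, hnN⟩, hdvd⟩ := hn
    constructor
    · have : d ^ k ≤ n := Nat.le_of_dvd (by omega) hdvd
      exact Nat.one_le_div_iff hdk0 |>.mpr this
    · exact Nat.div_le_div_right hnN
  · intro m hm
    simp only [Finset.mem_Icc] at hm
    simp only [Finset.mem_filter, Finset.mem_Icc]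
    obtain ⟨hm1, hmN⟩ := hm
    refine ⟨⟨?_, ?_⟩, Dvd.intro m rfl⟩
    · calc 1 ≤ d ^ k := hdk0
      _ ≤ d ^ k * m := Nat.le_mul_of_pos_right _ (by omega)
    · calc d ^ k * m ≤ d ^ k * (N / d ^ k) := Nat.mul_le_mul_left _ hmN
      _ = N / d ^ k * d ^ k := Nat.mul_comm _ _
      _ ≤ N := Nat.div_mul_le_self N (d^k)
  · intro n hn
    simp only [Finset.mem_filter, Finset.mem_Icc] at hn
    exact Nat.mul_div_cancel' hn.2
  · intro m hm
    exact Nat.mul_div_cancel_left m hdk0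
  · intro n hn
    simp only [Finset.mem_filter, Finset.mem_Icc] at hn
    congr 1
    have : (d:ℝ)^k * α * ((n / d^k : ℕ) : ℝ) = α * ((d^k * (n / d^k) : ℕ) : ℝ) := by
      push_cast; ring
    rw [Nat.mul_div_cancel' hn.2] at this
    rw [← this]
    norm_cast

lemma rpow_sum_le {ι : Type*} (s : Finset ι) (g : ι → ℝ) (hg : ∀ j ∈ s, 0 ≤ g j)
    (p : ℝ) (hp : 1 < p) :
    (∑ j ∈ s, g j) ^ p ≤ (s.card : ℝ)^(p-1) * ∑ j ∈ s, (g j)^p := by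
  rcases Finset.eq_empty_or_nonempty s with rfl | hs
  · simp [Real.zero_rpow (by linarith : p ≠ 0)]
  · have hc : (0:ℝ) < s.card := by
      exact_mod_cast Finset.card_pos.mpr hs
    have hw : ∀ j ∈ s, (0:ℝ) ≤ 1 / s.card := fun j _ => by positivity
    have hw1 : ∑ _j ∈ s, (1:ℝ) / s.card = 1 := by
      rw [Finset.sum_const, nsmul_eq_mul]
      field_simp
    have key := Real.rpow_arith_mean_le_arith_mean_rpow s (fun _ => 1 / (s.card:ℝ)) g
      hw hw1 hg hp.le
    have hL : (∑ j ∈ s, (1 / (s.card:ℝ)) * g j) = (1/(s.card:ℝ)) * ∑ j ∈ s, g j := by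
      rw [Finset.mul_sum]
    have hR : (∑ j ∈ s, (1 / (s.card:ℝ)) * (g j)^p) = (1/(s.card:ℝ)) * ∑ j ∈ s, (g j)^p := by
      rw [Finset.mul_sum]
    rw [hL, hR] at key
    have hsg : (0:ℝ) ≤ ∑ j ∈ s, g j := Finset.sum_nonneg hg
    rw [Real.mul_rpow (by positivity) hsg] at key
    -- key : (1/c)^p * (∑ g)^p ≤ (1/c) * ∑ g^p
    have hcp : (0:ℝ) < (s.card:ℝ)^(p-1) := Real.rpow_pos_of_pos hc _
    have hinv : ((1:ℝ)/(s.card:ℝ))^p = ((s.card:ℝ)^p)⁻¹ := by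
      rw [one_div, Real.inv_rpow hc.le]
    rw [hinv] at key
    have hcpp : (0:ℝ) < (s.card:ℝ)^p := Real.rpow_pos_of_pos hc _
    have h2 : (∑ j ∈ s, g j)^p ≤ (s.card:ℝ)^p * ((1/(s.card:ℝ)) * ∑ j ∈ s, (g j)^p) := by
      rw [← inv_mul_le_iff₀ hcpp] at *
      calc ((s.card:ℝ)^p)⁻¹ * (∑ j ∈ s, g j)^p = ((s.card:ℝ)^p)⁻¹ * (∑ j ∈ s, g j)^p := rfl
      _ ≤ _ := key
    calc (∑ j ∈ s, g j)^p ≤ (s.card:ℝ)^p * ((1/(s.card:ℝ)) * ∑ j ∈ s, (g j)^p) := h2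
    _ = ((s.card:ℝ)^p * (s.card:ℝ)⁻¹) * ∑ j ∈ s, (g j)^p := by ring
    _ = (s.card:ℝ)^(p-1) * ∑ j ∈ s, (g j)^p := by
        rw [show p - 1 = p + (-1) by ring, Real.rpow_add hc, Real.rpow_neg_one]

theorem Ti_Lp_bound (k : ℕ) (hk : 2 ≤ k) (p : ℝ) (hp : 1 < p) :
    ∃ C : ℝ, 0 < C ∧ ∀ N : ℕ, 2 ≤ N → ∀ i : ℕ, 1 ≤ i →
      (∫ α in (0:ℝ)..1, ‖T k N i α‖ ^ p) ≤ C * (2 : ℝ) ^ i * (N : ℝ) ^ (p - 1) := by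
  have hp0 : (0:ℝ) < p := by linarith
  have hp1 : (0:ℝ) < p - 1 := by linarith
  refine ⟨1 + 1/(p-1), by positivity, ?_⟩
  intro N hN i hi
  set Cp : ℝ := 1 + 1/(p-1) with hCpdef
  have hCp : 0 < Cp := by positivity
  set D : Finset ℕ := Finset.Ico (2^(i-1)) (2^i) with hD
  have hcard : D.card = 2^(i-1) := by
    rw [hD, Nat.card_Ico]
    have h2 : (2:ℕ)^i = 2 * 2^(i-1) := by
      rw [← pow_succ']
      congr 1
      omega
    omega
  -- continuity facts
  have he_cont : Continuous e := by unfold e; fun_prop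
  have hKer : ∀ (M c : ℕ), Continuous (fun α : ℝ => ‖Ker M ((c:ℝ) * α)‖ ^ p) := by
    intro M c
    exact (( (Ker_continuous M).comp (continuous_const.mul continuous_id)).norm).rpow_const
      (fun x => Or.inr hp0.le)
  have hTcont : Continuous (fun α => ‖T k N i α‖ ^ p) := by
    have : Continuous (T k N i) := by
      unfold T
      refine continuous_finset_sum _ fun n _ => ?_
      exact continuous_const.mul (he_cont.comp (continuous_id.mul continuous_const))
    exact (this.norm).rpow_const (fun x => Or.inr hp0.le)
  -- pointwise bound
  have hpoint : ∀ α : ℝ, ‖T k N i α‖ ^ p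
      ≤ (D.card : ℝ)^(p-1) * ∑ d ∈ D, ‖Ker (N / d^k) (((d^k : ℕ):ℝ) * α)‖ ^ p := by
    intro α
    have h1 : ‖T k N i α‖ ≤ ∑ d ∈ D, ‖Ker (N / d^k) (((d^k : ℕ):ℝ) * α)‖ := by
      rw [T_eq k N i hk hi α]
      refine le_trans (norm_sum_le _ _) (Finset.sum_le_sum fun d _ => ?_)
      rw [norm_mul]
      have hmu : ‖((ArithmeticFunction.moebius d : ℤ) : ℂ)‖ ≤ 1 := by
        rw [Complex.norm_intCast]
        exact_mod_cast ArithmeticFunction.abs_moebius_le_one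
      calc ‖((ArithmeticFunction.moebius d : ℤ) : ℂ)‖ * ‖Ker (N / d^k) (((d^k : ℕ):ℝ) * α)‖
          ≤ 1 * ‖Ker (N / d^k) (((d^k : ℕ):ℝ) * α)‖ :=
            mul_le_mul_of_nonneg_right hmu (norm_nonneg _)
      _ = ‖Ker (N / d^k) (((d^k : ℕ):ℝ) * α)‖ := one_mul _
    calc ‖T k N i α‖ ^ p ≤ (∑ d ∈ D, ‖Ker (N / d^k) (((d^k : ℕ):ℝ) * α)‖) ^ p :=
          Real.rpow_le_rpow (norm_nonneg _) h1 hp0.le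
    _ ≤ (D.card : ℝ)^(p-1) * ∑ d ∈ D, ‖Ker (N / d^k) (((d^k : ℕ):ℝ) * α)‖ ^ p :=
          rpow_sum_le D _ (fun _ _ => norm_nonneg _) p hp
  -- integrate
  have hint1 : (∫ α in (0:ℝ)..1, ‖T k N i α‖ ^ p)
      ≤ ∫ α in (0:ℝ)..1, (D.card : ℝ)^(p-1)
          * ∑ d ∈ D, ‖Ker (N / d^k) (((d^k : ℕ):ℝ) * α)‖ ^ p := by
    apply intervalIntegral.integral_mono_on (by norm_num)
      (hTcont.intervalIntegrable 0 1)
      ((continuous_const.mul (continuous_finset_sum _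
        (fun d _ => hKer (N / d^k) (d^k)))).intervalIntegrable 0 1)
    exact fun α _ => hpoint α
  have hint2 : (∫ α in (0:ℝ)..1, (D.card : ℝ)^(p-1)
        * ∑ d ∈ D, ‖Ker (N / d^k) (((d^k : ℕ):ℝ) * α)‖ ^ p)
      = (D.card : ℝ)^(p-1) * ∑ d ∈ D,
          ∫ α in (0:ℝ)..1, ‖Ker (N / d^k) (((d^k : ℕ):ℝ) * α)‖ ^ p := by
    rw [intervalIntegral.integral_const_mul]
    congr 1
    exact intervalIntegral.integral_finset_sum
      (fun d _ => (hKer (N / d^k) (d^k)).intervalIntegrable 0 1)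
  -- bound each inner integral
  set B : ℝ := (N:ℝ) / (2:ℝ)^((i-1)*k) with hB
  have hBnn : 0 ≤ B := by positivity
  have hinner : ∀ d ∈ D, (∫ α in (0:ℝ)..1, ‖Ker (N / d^k) (((d^k : ℕ):ℝ) * α)‖ ^ p)
      ≤ Cp * B^(p-1) := by
    intro d hd
    have hd1 : 1 ≤ d := le_trans Nat.one_le_two_pow (Finset.mem_Ico.mp hd).1
    have hdk1 : 1 ≤ d^k := Nat.one_le_pow _ _ (by omega)
    have hper : Function.Periodic (fun β => ‖Ker (N / d^k) β‖ ^ p) 1 := by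
      intro β
      simp only [Ker_periodic (N / d^k) β]
    have hintg : ∀ t₁ t₂ : ℝ, IntervalIntegrable (fun β => ‖Ker (N / d^k) β‖ ^ p)
        MeasureTheory.volume t₁ t₂ := fun t₁ t₂ =>
      (((Ker_continuous _).norm).rpow_const (fun x => Or.inr hp0.le)).intervalIntegrable t₁ t₂
    have hscale := periodic_scale (fun β => ‖Ker (N / d^k) β‖ ^ p) hper hintg (d^k) hdk1
    rw [hscale]
    refine le_trans (Ker_Lp p hp (N / d^k)) ?_
    have hMB : ((N / d^k : ℕ) : ℝ) ≤ B := by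
      refine le_trans (Nat.cast_div_le) ?_
      rw [hB]
      have hdlow : ((2:ℝ))^((i-1)*k) ≤ ((d:ℝ))^k := by
        rw [pow_mul]
        refine pow_le_pow_left₀ (by positivity) ?_ k
        have := (Finset.mem_Ico.mp hd).1
        exact_mod_cast (by exact_mod_cast this : ((2^(i-1) : ℕ):ℝ) ≤ (d:ℝ))
      have hpos : (0:ℝ) < (2:ℝ)^((i-1)*k) := by positivity
      push_cast
      exact div_le_div_of_nonneg_left (by positivity) hpos hdlow
    have : ((N / d^k : ℕ) : ℝ)^(p-1) ≤ B^(p-1) :=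
      Real.rpow_le_rpow (by positivity) hMB hp1.le
    calc (1 + 1/(p-1)) * ((N / d^k : ℕ) : ℝ)^(p-1) ≤ (1 + 1/(p-1)) * B^(p-1) := by
          exact mul_le_mul_of_nonneg_left this (by positivity)
    _ = Cp * B^(p-1) := by rw [hCpdef]
  have hsum : (∑ d ∈ D, ∫ α in (0:ℝ)..1, ‖Ker (N / d^k) (((d^k : ℕ):ℝ) * α)‖ ^ p)
      ≤ (D.card : ℝ) * (Cp * B^(p-1)) := by
    have := Finset.sum_le_card_nsmul D _ (Cp * B^(p-1)) hinner
    simpa [nsmul_eq_mul] using this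
  -- final arithmetic
  have hfinal : (D.card : ℝ)^(p-1) * ((D.card : ℝ) * (Cp * B^(p-1)))
      ≤ Cp * (2:ℝ)^i * (N:ℝ)^(p-1) := by
    have hcardR : (D.card : ℝ) = (2:ℝ)^(i-1) := by
      rw [hcard]; push_cast; ring
    rw [hcardR, hB]
    set r : ℝ := (2:ℝ)^(i-1) / (2:ℝ)^((i-1)*k) with hr
    have hrnn : 0 ≤ r := by positivity
    have hr1 : r ≤ 1 := by
      rw [hr, div_le_one (by positivity)]
      exact pow_le_pow_right₀ (by norm_num) (Nat.le_mul_of_pos_right _ (by omega))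
    have hrp : r^(p-1) ≤ 1 := Real.rpow_le_one hrnn hr1 hp1.le
    have hsplit : ((N:ℝ) / (2:ℝ)^((i-1)*k))^(p-1)
        = (N:ℝ)^(p-1) / ((2:ℝ)^((i-1)*k))^(p-1) :=
      Real.div_rpow (by positivity) (by positivity) _
    have hrsplit : r^(p-1) = ((2:ℝ)^(i-1))^(p-1) / ((2:ℝ)^((i-1)*k))^(p-1) := by
      rw [hr]
      exact Real.div_rpow (by positivity) (by positivity) _
    calc ((2:ℝ)^(i-1))^(p-1) * ((2:ℝ)^(i-1) * (Cp * ((N:ℝ) / (2:ℝ)^((i-1)*k))^(p-1)))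
        = Cp * (N:ℝ)^(p-1) * (2:ℝ)^(i-1) * r^(p-1) := by
          rw [hsplit, hrsplit]; ring
    _ ≤ Cp * (N:ℝ)^(p-1) * (2:ℝ)^(i-1) * 1 := by
          exact mul_le_mul_of_nonneg_left hrp (by positivity)
    _ ≤ Cp * (2:ℝ)^i * (N:ℝ)^(p-1) := by
          rw [mul_one]
          have h2i : (2:ℝ)^(i-1) ≤ (2:ℝ)^i :=
            pow_le_pow_right₀ (by norm_num) (by omega)
          calc Cp * (N:ℝ)^(p-1) * (2:ℝ)^(i-1) ≤ Cp * (N:ℝ)^(p-1) * (2:ℝ)^i := by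
                exact mul_le_mul_of_nonneg_left h2i (by positivity)
          _ = Cp * (2:ℝ)^i * (N:ℝ)^(p-1) := by ring
  calc (∫ α in (0:ℝ)..1, ‖T k N i α‖ ^ p)
      ≤ (D.card : ℝ)^(p-1) * ∑ d ∈ D,
          ∫ α in (0:ℝ)..1, ‖Ker (N / d^k) (((d^k : ℕ):ℝ) * α)‖ ^ p := by
        rw [← hint2]; exact hint1
  _ ≤ (D.card : ℝ)^(p-1) * ((D.card : ℝ) * (Cp * B^(p-1))) := by
        exact mul_le_mul_of_nonneg_left hsum (by positivity)
  _ ≤ Cp * (2:ℝ)^i * (N:ℝ)^(p-1) := hfinal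
end

section
/- Let k ≥ 2 be an integer. There is a constant C = C(k) > 0 such that for all integers N ≥ 2 and all positive integers i, the exponential sum T_i(α) = ∑_{n ≤ N} b_{2^{i-1},2^i}(n) e(αn) satisfies ∫₀¹ |T_i(α)|² dα ≤ C · 2^{-i(k-1)} N. -/
open Finset

-- gcd of powers
lemma gcd_pow_aux (g a' b' k : ℕ) (h : Nat.Coprime a' b') :
    Nat.gcd ((g * a') ^ k) ((g * b') ^ k) = g ^ k := by
  have h2 : Nat.Coprime (a' ^ k) (b' ^ k) := Nat.Coprime.pow k k h
  rw [mul_pow, mul_pow, Nat.gcd_mul_left, h2, mul_one]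

lemma gcd_pow_eq (a b k : ℕ) (ha : 0 < a) :
    Nat.gcd (a ^ k) (b ^ k) = Nat.gcd a b ^ k := by
  have hgpos : 0 < Nat.gcd a b := Nat.gcd_pos_of_pos_left b ha
  obtain ⟨a', ha'⟩ := Nat.gcd_dvd_left a b
  obtain ⟨b', hb'⟩ := Nat.gcd_dvd_right a b
  have hda : a / Nat.gcd a b = a' := by
    nth_rewrite 1 [ha']
    exact Nat.mul_div_cancel_left _ hgpos
  have hdb : b / Nat.gcd a b = b' := by
    nth_rewrite 1 [hb']
    exact Nat.mul_div_cancel_left _ hgpos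
  have hcop : Nat.Coprime a' b' := by
    have h1 := Nat.coprime_div_gcd_div_gcd (m := a) (n := b) hgpos
    rwa [hda, hdb] at h1
  have key := gcd_pow_aux (Nat.gcd a b) a' b' k hcop
  rw [← ha', ← hb'] at key
  exact key

-- count of multiples of L in [1, N]
lemma cnt_le (N L : ℕ) :
    (((Icc 1 N).filter (fun n => L ∣ n)).card) * L ≤ N := by
  have h1 : Finset.Icc 1 N = Finset.Ioc 0 N := rfl
  rw [h1, Nat.Ioc_filter_dvd_card_eq_div]
  exact Nat.div_mul_le_self N L

-- multiples of g in [D, 2D)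
lemma mult_count (D g : ℕ) (hD : 0 < D) (hg : 0 < g) (hg2 : g ≤ 2 * D) :
    (((Ico D (2 * D)).filter (fun d => g ∣ d)).card) * g ≤ 3 * D := by
  have h1 : Finset.Ico D (2 * D) = Finset.Ioc (D - 1) (2 * D - 1) := by
    ext x; simp [Finset.mem_Ico, Finset.mem_Ioc]; omega
  have hsplit : Finset.Ioc 0 (D-1) ∪ Finset.Ioc (D-1) (2*D-1) = Finset.Ioc 0 (2*D-1) := by
    apply Finset.Ioc_union_Ioc_eq_Ioc <;> omega
  have hdisj : Disjoint (Finset.Ioc 0 (D-1)) (Finset.Ioc (D-1) (2*D-1)) := by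
    simp [Finset.disjoint_left, Finset.mem_Ioc]; omega
  have hcard : ((Finset.Ioc 0 (D-1)).filter (fun d => g ∣ d)).card
      + ((Finset.Ioc (D-1) (2*D-1)).filter (fun d => g ∣ d)).card
      = ((Finset.Ioc 0 (2*D-1)).filter (fun d => g ∣ d)).card := by
    rw [← hsplit, Finset.filter_union, Finset.card_union_of_disjoint]
    exact Finset.disjoint_filter_filter hdisj
  rw [h1]
  rw [Nat.Ioc_filter_dvd_card_eq_div, Nat.Ioc_filter_dvd_card_eq_div] at hcard
  have hm : ((Finset.Ioc (D-1) (2*D-1)).filter (fun d => g ∣ d)).card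
      = (2*D-1)/g - (D-1)/g := by omega
  rw [hm, Nat.sub_mul]
  have h2 : (2*D-1)/g * g ≤ 2*D-1 := Nat.div_mul_le_self _ _
  have h3 : D - 1 < (D-1)/g * g + g := Nat.lt_div_mul_add hg
  omega


lemma main_count (k N D : ℕ) (hk : 2 ≤ k) (hD : 0 < D) :
    (∑ n ∈ Icc 1 N, (((Ico D (2*D)).filter (fun d => d ^ k ∣ n)).card) ^ 2) * D ^ (k-1)
      ≤ 9 * 2 ^ (k-1) * N := by
  set S := Ico D (2*D) with hS
  set cnt : ℕ → ℕ → ℕ := fun a b => ((Icc 1 N).filter (fun n => a ^ k ∣ n ∧ b ^ k ∣ n)).card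
    with hcnt
  have hswap : ∑ n ∈ Icc 1 N, (((S.filter (fun d => d ^ k ∣ n)).card) ^ 2)
      = ∑ a ∈ S, ∑ b ∈ S, cnt a b := by
    have h1 : ∀ n, ((S.filter (fun d => d ^ k ∣ n)).card) ^ 2
        = ∑ a ∈ S, ∑ b ∈ S, (if a ^ k ∣ n ∧ b ^ k ∣ n then 1 else 0) := by
      intro n
      rw [sq, Finset.card_filter, Finset.sum_mul_sum]
      refine Finset.sum_congr rfl fun a _ => Finset.sum_congr rfl fun c _ => ?_
      by_cases h1 : a ^ k ∣ n <;> by_cases h2 : c ^ k ∣ n <;> simp [h1, h2]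
    simp only [h1]
    rw [Finset.sum_comm]
    refine Finset.sum_congr rfl fun a _ => ?_
    rw [Finset.sum_comm]
    refine Finset.sum_congr rfl fun c _ => ?_
    exact (Finset.card_filter _ _).symm
  -- per-pair bound
  have hpair : ∀ a ∈ S, ∀ b ∈ S, cnt a b * D ^ (2*k) ≤ N * Nat.gcd a b ^ k := by
    intro a ha c hc
    simp only [hS, Finset.mem_Ico] at ha hc
    have hapos : 0 < a := lt_of_lt_of_le hD ha.1
    have hcpos : 0 < c := lt_of_lt_of_le hD hc.1
    have hsub : (Icc 1 N).filter (fun n => a ^ k ∣ n ∧ c ^ k ∣ n)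
        ⊆ (Icc 1 N).filter (fun n => Nat.lcm (a ^ k) (c ^ k) ∣ n) := by
      intro n hn
      rw [Finset.mem_filter] at hn ⊢
      exact ⟨hn.1, Nat.lcm_dvd hn.2.1 hn.2.2⟩
    have h2 : cnt a c ≤ ((Icc 1 N).filter (fun n => Nat.lcm (a ^ k) (c ^ k) ∣ n)).card :=
      Finset.card_le_card hsub
    have h3 : cnt a c * Nat.lcm (a ^ k) (c ^ k) ≤ N :=
      le_trans (Nat.mul_le_mul_right _ h2) (cnt_le N _)
    have hgl : Nat.lcm (a ^ k) (c ^ k) * Nat.gcd a c ^ k = (a * c) ^ k := by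
      rw [← gcd_pow_eq a c k hapos, mul_comm, Nat.gcd_mul_lcm, ← mul_pow]
    have hD2 : D ^ (2*k) ≤ (a * c) ^ k := by
      rw [two_mul, pow_add, ← mul_pow]
      exact Nat.pow_le_pow_left (Nat.mul_le_mul ha.1 hc.1) k
    calc cnt a c * D ^ (2*k) ≤ cnt a c * (a * c) ^ k :=
          Nat.mul_le_mul_left _ hD2
      _ = cnt a c * Nat.lcm (a ^ k) (c ^ k) * Nat.gcd a c ^ k := by rw [mul_assoc, hgl]
      _ ≤ N * Nat.gcd a c ^ k := Nat.mul_le_mul_right _ h3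
  -- gcd sum bound
  have hgcdsum : ∑ a ∈ S, ∑ b ∈ S, Nat.gcd a b ^ k ≤ 9 * 2 ^ (k-1) * D ^ (k+1) := by
    have hmaps : ∀ p ∈ S ×ˢ S, Nat.gcd p.1 p.2 ∈ Icc 1 (2*D) := by
      intro p hp
      rw [Finset.mem_product] at hp
      simp only [hS, Finset.mem_Ico] at hp
      have h1 : 0 < p.1 := lt_of_lt_of_le hD hp.1.1
      refine Finset.mem_Icc.2 ⟨Nat.gcd_pos_of_pos_left _ h1, ?_⟩
      exact le_trans (Nat.gcd_le_left _ h1) (le_of_lt hp.1.2)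
    have hfib := Finset.sum_fiberwise_of_maps_to hmaps (fun p => Nat.gcd p.1 p.2 ^ k)
    rw [← Finset.sum_product', ← hfib]
    have hterm : ∀ g ∈ Icc 1 (2*D),
        ∑ p ∈ (S ×ˢ S).filter (fun p => Nat.gcd p.1 p.2 = g), Nat.gcd p.1 p.2 ^ k
          ≤ 9 * D^2 * (2*D) ^ (k-2) := by
      intro g hg
      rw [Finset.mem_Icc] at hg
      have hgpos : 0 < g := hg.1
      have hfilsub : (S ×ˢ S).filter (fun p => Nat.gcd p.1 p.2 = g)
          ⊆ (S.filter (fun d => g ∣ d)) ×ˢ (S.filter (fun d => g ∣ d)) := by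
        intro p hp
        rw [Finset.mem_filter, Finset.mem_product] at hp
        rw [Finset.mem_product, Finset.mem_filter, Finset.mem_filter]
        exact ⟨⟨hp.1.1, hp.2 ▸ Nat.gcd_dvd_left _ _⟩, ⟨hp.1.2, hp.2 ▸ Nat.gcd_dvd_right _ _⟩⟩
      have hcard : ((S ×ˢ S).filter (fun p => Nat.gcd p.1 p.2 = g)).card
          ≤ (S.filter (fun d => g ∣ d)).card * (S.filter (fun d => g ∣ d)).card := by
        have := Finset.card_le_card hfilsub
        rwa [Finset.card_product] at this
      calc ∑ p ∈ (S ×ˢ S).filter (fun p => Nat.gcd p.1 p.2 = g), Nat.gcd p.1 p.2 ^ k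
          = ∑ p ∈ (S ×ˢ S).filter (fun p => Nat.gcd p.1 p.2 = g), g ^ k := by
            refine Finset.sum_congr rfl fun p hp => ?_
            rw [Finset.mem_filter] at hp
            rw [hp.2]
        _ = ((S ×ˢ S).filter (fun p => Nat.gcd p.1 p.2 = g)).card * g ^ k := by
            rw [Finset.sum_const, smul_eq_mul]
        _ ≤ ((S.filter (fun d => g ∣ d)).card * (S.filter (fun d => g ∣ d)).card) * g ^ k :=
            Nat.mul_le_mul_right _ hcard
        _ = ((S.filter (fun d => g ∣ d)).card * g) * ((S.filter (fun d => g ∣ d)).card * g)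
              * g ^ (k-2) := by
            have hkk : g ^ k = g ^ 2 * g ^ (k-2) := by
              rw [← pow_add]
              congr 1
              omega
            rw [hkk]
            ring
        _ ≤ (3 * D) * (3 * D) * (2*D) ^ (k-2) := by
            have hm := mult_count D g hD hgpos hg.2
            exact Nat.mul_le_mul (Nat.mul_le_mul hm hm)
              (Nat.pow_le_pow_left hg.2 _)
        _ = 9 * D^2 * (2*D) ^ (k-2) := by ring
    calc ∑ g ∈ Icc 1 (2*D), ∑ p ∈ (S ×ˢ S).filter (fun p => Nat.gcd p.1 p.2 = g),
            Nat.gcd p.1 p.2 ^ k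
        ≤ ∑ g ∈ Icc 1 (2*D), 9 * D^2 * (2*D) ^ (k-2) := Finset.sum_le_sum hterm
      _ = (2*D) * (9 * D^2 * (2*D) ^ (k-2)) := by
          rw [Finset.sum_const, Nat.card_Icc, smul_eq_mul]
          have h21 : 2*D + 1 - 1 = 2*D := by omega
          rw [h21]
      _ = 9 * (2*D) ^ (k-1) * D^2 := by
          have hkk : k - 1 = (k-2) + 1 := by omega
          rw [hkk, pow_succ]
          ring
      _ = 9 * 2 ^ (k-1) * D ^ (k+1) := by
          rw [mul_pow]
          have hkk : k + 1 = (k-1) + 2 := by omega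
          rw [hkk, pow_add]
          ring
  -- combine
  have hcomb : (∑ a ∈ S, ∑ b ∈ S, cnt a b) * D ^ (2*k)
      ≤ 9 * 2 ^ (k-1) * N * D ^ (k+1) := by
    rw [Finset.sum_mul]
    calc ∑ a ∈ S, (∑ b ∈ S, cnt a b) * D ^ (2*k)
        = ∑ a ∈ S, ∑ b ∈ S, cnt a b * D ^ (2*k) := by
          refine Finset.sum_congr rfl fun a _ => ?_
          rw [Finset.sum_mul]
      _ ≤ ∑ a ∈ S, ∑ b ∈ S, N * Nat.gcd a b ^ k :=
          Finset.sum_le_sum fun a ha => Finset.sum_le_sum fun c hc => hpair a ha c hc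
      _ = N * ∑ a ∈ S, ∑ b ∈ S, Nat.gcd a b ^ k := by
          rw [Finset.mul_sum]
          refine Finset.sum_congr rfl fun a _ => ?_
          rw [Finset.mul_sum]
      _ ≤ N * (9 * 2 ^ (k-1) * D ^ (k+1)) := Nat.mul_le_mul_left _ hgcdsum
      _ = 9 * 2 ^ (k-1) * N * D ^ (k+1) := by ring
  rw [hswap]
  have hpow : D ^ (2*k) = D ^ (k-1) * D ^ (k+1) := by
    rw [← pow_add]
    congr 1
    omega
  rw [hpow, ← mul_assoc] at hcomb
  exact Nat.le_of_mul_le_mul_right hcomb (Nat.pow_pos hD)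

lemma continuous_e : Continuous e := by
  unfold e
  fun_prop

lemma orth (n m : ℕ) :
    (∫ α in (0:ℝ)..1, e (α * n) * (starRingEnd ℂ) (e (α * m)))
      = if n = m then 1 else 0 := by
  have hfun : ∀ α : ℝ, e (α * n) * (starRingEnd ℂ) (e (α * m))
      = Complex.exp ((2 * Real.pi * Complex.I * ((n : ℂ) - (m : ℂ))) * α) := by
    intro α
    rw [e, e, ← Complex.exp_conj, ← Complex.exp_add]
    congr 1
    simp only [map_mul, Complex.conj_I, Complex.conj_ofReal, map_ofNat]
    push_cast
    ring
  rw [intervalIntegral.integral_congr (g := fun α : ℝ =>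
    Complex.exp ((2 * Real.pi * Complex.I * ((n : ℂ) - (m : ℂ))) * α)) (fun α _ => hfun α)]
  by_cases hnm : n = m
  · subst hnm
    simp
  · have hc : (2 * (Real.pi : ℂ) * Complex.I * ((n : ℂ) - (m : ℂ))) ≠ 0 := by
      apply mul_ne_zero
      · apply mul_ne_zero
        · apply mul_ne_zero two_ne_zero
          exact Complex.ofReal_ne_zero.2 Real.pi_ne_zero
        · exact Complex.I_ne_zero
      · rw [sub_ne_zero]
        exact fun h => hnm (Nat.cast_injective h)
    rw [integral_exp_mul_complex hc]
    simp only [Complex.ofReal_one, Complex.ofReal_zero]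
    have hexp : Complex.exp (2 * (Real.pi : ℂ) * Complex.I * ((n : ℂ) - (m : ℂ)) * 1) = 1 := by
      have h1 : (2 * (Real.pi : ℂ) * Complex.I * ((n : ℂ) - (m : ℂ)) * 1)
          = (((n : ℤ) - (m : ℤ) : ℤ) : ℂ) * (2 * (Real.pi : ℂ) * Complex.I) := by
        push_cast
        ring
      rw [h1]
      exact Complex.exp_int_mul_two_pi_mul_I ((n : ℤ) - (m : ℤ))
    rw [hexp, mul_zero, Complex.exp_zero, sub_self, zero_div, if_neg hnm]

lemma cintegral_ofReal {a c : ℝ} {f : ℝ → ℝ} :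
    (∫ x in a..c, (f x : ℂ)) = ((∫ x in a..c, f x : ℝ) : ℂ) :=
  RCLike.intervalIntegral_ofReal

lemma parseval (k N i : ℕ) :
    (∫ α in (0:ℝ)..1, ‖T k N i α‖ ^ 2)
      = ∑ n ∈ Finset.Icc 1 N, ((b k ((2:ℝ)^(i-1)) ((2:ℝ)^i) n : ℝ)) ^ 2 := by
  set β : ℕ → ℂ := fun n => ((b k ((2:ℝ)^(i-1)) ((2:ℝ)^i) n : ℤ) : ℂ) with hβ
  have hTeq : ∀ α : ℝ, T k N i α = ∑ n ∈ Icc 1 N, β n * e (α * n) := fun α => rfl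
  have hpt : ∀ α : ℝ, ((‖T k N i α‖ ^ 2 : ℝ) : ℂ)
      = ∑ n ∈ Icc 1 N, ∑ m ∈ Icc 1 N,
          (β n * (starRingEnd ℂ) (β m)) * (e (α * n) * (starRingEnd ℂ) (e (α * m))) := by
    intro α
    have h1 : ((‖T k N i α‖ ^ 2 : ℝ) : ℂ) = T k N i α * (starRingEnd ℂ) (T k N i α) := by
      rw [Complex.mul_conj, Complex.normSq_eq_norm_sq]
    rw [h1, hTeq, map_sum, Finset.sum_mul_sum]
    refine Finset.sum_congr rfl fun n _ => Finset.sum_congr rfl fun m _ => ?_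
    rw [map_mul]
    ring
  have hint : ∀ (n m : ℕ), IntervalIntegrable
      (fun α : ℝ => (β n * (starRingEnd ℂ) (β m)) * (e (α * n) * (starRingEnd ℂ) (e (α * m))))
      MeasureTheory.volume 0 1 := by
    intro n m
    apply Continuous.intervalIntegrable
    apply Continuous.mul continuous_const
    apply Continuous.mul
    · exact continuous_e.comp (continuous_id.mul continuous_const)
    · exact Continuous.star (continuous_e.comp (continuous_id.mul continuous_const))
  have key : ((∫ α in (0:ℝ)..1, ‖T k N i α‖ ^ 2 : ℝ) : ℂ)
      = ∑ n ∈ Icc 1 N, β n * (starRingEnd ℂ) (β n) := by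
    rw [← cintegral_ofReal]
    rw [intervalIntegral.integral_congr (fun α _ => hpt α)]
    have hs : (∫ α in (0:ℝ)..1, ∑ n ∈ Icc 1 N, ∑ m ∈ Icc 1 N,
        (β n * (starRingEnd ℂ) (β m)) * (e (α * n) * (starRingEnd ℂ) (e (α * m))))
          = ∑ n ∈ Icc 1 N, ∫ α in (0:ℝ)..1, ∑ m ∈ Icc 1 N,
            (β n * (starRingEnd ℂ) (β m)) * (e (α * n) * (starRingEnd ℂ) (e (α * m))) :=
      intervalIntegral.integral_finset_sum
        (f := fun n (α : ℝ) => ∑ m ∈ Icc 1 N,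
          (β n * (starRingEnd ℂ) (β m)) * (e (α * n) * (starRingEnd ℂ) (e (α * m))))
        (fun n _ => by
          have h := IntervalIntegrable.sum (μ := MeasureTheory.volume) (a := 0) (b := 1)
            (Icc 1 N)
            (f := fun m (α : ℝ) =>
              (β n * (starRingEnd ℂ) (β m)) * (e (α * n) * (starRingEnd ℂ) (e (α * m))))
            (fun m _ => hint n m)
          rw [Finset.sum_fn] at h
          exact h)
    rw [hs]
    have h2 : ∀ n ∈ Icc 1 N, (∫ α in (0:ℝ)..1, ∑ m ∈ Icc 1 N,
        (β n * (starRingEnd ℂ) (β m)) * (e (α * n) * (starRingEnd ℂ) (e (α * m))))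
          = β n * (starRingEnd ℂ) (β n) := by
      intro n hn
      rw [intervalIntegral.integral_finset_sum (fun m _ => hint n m)]
      have h3 : ∀ m ∈ Icc 1 N, (∫ α in (0:ℝ)..1,
          (β n * (starRingEnd ℂ) (β m)) * (e (α * n) * (starRingEnd ℂ) (e (α * m))))
            = (β n * (starRingEnd ℂ) (β m)) * (if n = m then 1 else 0) := by
        intro m _
        rw [intervalIntegral.integral_const_mul, orth]
      rw [Finset.sum_congr rfl h3]
      simp only [mul_ite, mul_one, mul_zero]
      rw [Finset.sum_ite_eq, if_pos hn]
    rw [Finset.sum_congr rfl h2]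
  have key2 : ∑ n ∈ Icc 1 N, β n * (starRingEnd ℂ) (β n)
      = ((∑ n ∈ Icc 1 N, ((b k ((2:ℝ)^(i-1)) ((2:ℝ)^i) n : ℝ)) ^ 2 : ℝ) : ℂ) := by
    push_cast
    refine Finset.sum_congr rfl fun n _ => ?_
    rw [hβ]
    push_cast [map_intCast]
    ring
  rw [key2] at key
  exact_mod_cast key

theorem Ti_L2_bound (k : ℕ) (hk : 2 ≤ k) :
    ∃ C : ℝ, 0 < C ∧ ∀ N : ℕ, 2 ≤ N → ∀ i : ℕ, 1 ≤ i →
      (∫ α in (0:ℝ)..1, ‖T k N i α‖ ^ 2)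
        ≤ C * (2 : ℝ) ^ (-(i : ℝ) * ((k : ℝ) - 1)) * (N : ℝ) := by
  refine ⟨9 * 4 ^ (k-1), by positivity, ?_⟩
  intro N hN i hi
  obtain ⟨j, rfl⟩ := Nat.exists_eq_add_of_le hi
  set i := 1 + j with hij
  set D := 2 ^ (i-1) with hD
  have hDpos : 0 < D := Nat.pow_pos (by norm_num)
  have h2D : 2 * D = 2 ^ i := by
    rw [hD, hij]
    rw [show 1 + j - 1 = j by omega, show 1 + j = j + 1 by omega, pow_succ]
    ring
  have hc1 : ((D : ℕ) : ℝ) = (2:ℝ)^(i-1) := by rw [hD]; push_cast; ring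
  have hc2 : ((2*D : ℕ) : ℝ) = (2:ℝ)^i := by rw [h2D]; push_cast; ring
  have hbeq : ∀ n, 1 ≤ n → b k ((2:ℝ)^(i-1)) ((2:ℝ)^i) n
      = ∑ d ∈ (Ico D (2*D)).filter (fun d => d ^ k ∣ n), ArithmeticFunction.moebius d := by
    intro n hn
    rw [b]
    apply Finset.sum_congr _ (fun _ _ => rfl)
    ext d
    simp only [Finset.mem_filter, Finset.mem_Icc, Finset.mem_Ico]
    constructor
    · rintro ⟨⟨_, _⟩, h3, h4, h5⟩
      rw [← hc1] at h3
      rw [← hc2] at h4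
      exact ⟨⟨by exact_mod_cast h3, by exact_mod_cast h4⟩, h5⟩
    · rintro ⟨⟨h3, h4⟩, h5⟩
      have hd1 : 1 ≤ d := le_trans hDpos h3
      have hdn : d ≤ n := le_trans (Nat.le_self_pow (by omega) d) (Nat.le_of_dvd hn h5)
      refine ⟨⟨hd1, hdn⟩, ?_, ?_, h5⟩
      · rw [← hc1]; exact_mod_cast h3
      · rw [← hc2]; exact_mod_cast h4
  have hsq : ∀ n ∈ Icc 1 N, ((b k ((2:ℝ)^(i-1)) ((2:ℝ)^i) n : ℝ))^2
      ≤ ((((Ico D (2*D)).filter (fun d => d ^ k ∣ n)).card : ℝ))^2 := by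
    intro n hn
    rw [Finset.mem_Icc] at hn
    have habs : |b k ((2:ℝ)^(i-1)) ((2:ℝ)^i) n|
        ≤ (((Ico D (2*D)).filter (fun d => d ^ k ∣ n)).card : ℤ) := by
      rw [hbeq n hn.1]
      refine le_trans (Finset.abs_sum_le_sum_abs _ _) ?_
      have hmu : ∀ d ∈ (Ico D (2*D)).filter (fun d => d ^ k ∣ n),
          |ArithmeticFunction.moebius d| ≤ (1:ℤ) := by
        intro d _
        rw [ArithmeticFunction.abs_moebius]
        split <;> norm_num
      calc ∑ d ∈ (Ico D (2*D)).filter (fun d => d ^ k ∣ n), |ArithmeticFunction.moebius d|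
          ≤ ((Ico D (2*D)).filter (fun d => d ^ k ∣ n)).card • (1:ℤ) :=
            Finset.sum_le_card_nsmul _ _ _ hmu
        _ = _ := by simp
    have h2 : |((b k ((2:ℝ)^(i-1)) ((2:ℝ)^i) n : ℝ))|
        ≤ ((((Ico D (2*D)).filter (fun d => d ^ k ∣ n)).card : ℝ)) := by
      rw [← Int.cast_abs]
      exact_mod_cast habs
    calc ((b k ((2:ℝ)^(i-1)) ((2:ℝ)^i) n : ℝ))^2
        = |((b k ((2:ℝ)^(i-1)) ((2:ℝ)^i) n : ℝ))|^2 := (sq_abs _).symm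
      _ ≤ ((((Ico D (2*D)).filter (fun d => d ^ k ∣ n)).card : ℝ))^2 :=
          pow_le_pow_left₀ (abs_nonneg _) h2 2
  rw [parseval k N i]
  set Ssum : ℕ := ∑ n ∈ Icc 1 N, ((Ico D (2*D)).filter (fun d => d ^ k ∣ n)).card ^ 2
    with hSsum
  have hnat := main_count k N D hk hDpos
  have hnat2 : Ssum * 2 ^ (i*(k-1)) ≤ 9 * 4^(k-1) * N := by
    have hmul := Nat.mul_le_mul_right (2^(k-1)) hnat
    have he1 : Ssum * D^(k-1) * 2^(k-1) = Ssum * 2^(i*(k-1)) := by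
      rw [hD, mul_assoc, ← pow_mul, ← pow_add]
      congr 2
      rw [hij, show 1+j-1 = j by omega]
      ring
    have he2 : 9 * 2^(k-1) * N * 2^(k-1) = 9 * 4^(k-1) * N := by
      rw [show (4:ℕ) = 2*2 by norm_num, mul_pow]
      ring
    rw [he1, he2] at hmul
    exact hmul
  have hreal : (Ssum : ℝ) ≤ 9 * 4^(k-1) * N / 2^(i*(k-1)) := by
    rw [le_div_iff₀ (by positivity)]
    exact_mod_cast hnat2
  have hcast : ((i*(k-1) : ℕ) : ℝ) = (i:ℝ)*((k:ℝ)-1) := by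
    push_cast [Nat.cast_sub (show 1 ≤ k by omega)]
    ring
  calc ∑ n ∈ Finset.Icc 1 N, ((b k ((2:ℝ)^(i-1)) ((2:ℝ)^i) n : ℝ))^2
      ≤ (Ssum : ℝ) := by
        rw [hSsum]
        push_cast
        exact Finset.sum_le_sum hsq
    _ ≤ 9 * 4^(k-1) * N / 2^(i*(k-1)) := hreal
    _ = 9 * 4 ^ (k-1) * (2 : ℝ) ^ (-(i : ℝ) * ((k : ℝ) - 1)) * (N : ℝ) := by
        rw [show (-(i:ℝ) * ((k:ℝ)-1)) = -((i*(k-1) : ℕ) : ℝ) by rw [hcast]; ring]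
        rw [Real.rpow_neg (by norm_num), Real.rpow_natCast]
        field_simp
end
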